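/- arXiv:1611.04031 — 4 statements merged into one kernel-verified Lean document; each statement's English description precedes it below -/
import Mathlib

section
/- Let p be an odd prime and n ≥ 1. A function f : F_p^n → F_p^n is planar (i.e., for every nonzero a ∈ F_p^n the map x ↦ f(x+a) − f(x) is a bijection of F_p^n) if and only if for every nonzero c ∈ F_p^n the component function f_c(x) = c·f(x) is bent, i.e., |W_{f_c}(u)|^2 = p^n for every u ∈ F_p^n. -/
open Finset

noncomputable section

/-- The Walsh–Hadamard transform of `g : F_p^n → F_p` at `u`:
`W_g(u) = Σ_x ε_p^{g(x) − u·x}` with `ε_p = e^{2πi/p}`. -/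
def walsh (p n : ℕ) [Fact p.Prime] (g : (Fin n → ZMod p) → ZMod p)
    (u : Fin n → ZMod p) : ℂ :=
  ∑ x : Fin n → ZMod p,
    Complex.exp (2 * Real.pi * Complex.I / p) ^ (g x - ∑ i, u i * x i).val

namespace PlanarAux
variable (p : ℕ) [Fact p.Prime]

def eps : ℂ := Complex.exp (2 * Real.pi * Complex.I / p)

lemma hprim : IsPrimitiveRoot (eps p) p :=
  Complex.isPrimitiveRoot_exp p (Fact.out (p := p.Prime)).ne_zero

lemma eps_pow_p : eps p ^ p = 1 := (hprim p).pow_eq_one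

lemma eps_ne_one : eps p ≠ 1 := (hprim p).ne_one (Fact.out (p := p.Prime)).one_lt

lemma eps_pow_mod (m : ℕ) : eps p ^ (m % p) = eps p ^ m := by
  conv_rhs => rw [← Nat.div_add_mod m p]
  rw [pow_add, pow_mul, eps_pow_p, one_pow, one_mul]

def ee (t : ZMod p) : ℂ := eps p ^ t.val

lemma ee_add (s t : ZMod p) : ee p (s + t) = ee p s * ee p t := by
  haveI : NeZero p := ⟨(Fact.out (p := p.Prime)).ne_zero⟩
  unfold ee
  rw [ZMod.val_add, eps_pow_mod, pow_add]

lemma ee_zero : ee p 0 = 1 := by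
  haveI : NeZero p := ⟨(Fact.out (p := p.Prime)).ne_zero⟩
  simp [ee]

lemma ee_mul_neg (t : ZMod p) : ee p t * ee p (-t) = 1 := by
  rw [← ee_add, add_neg_cancel, ee_zero]

lemma abs_eps : ‖eps p‖ = 1 := by
  have h := congrArg (‖·‖) (eps_pow_p p)
  rw [norm_pow, norm_one] at h
  have h0 : (0:ℝ) ≤ ‖eps p‖ := norm_nonneg _
  exact (pow_eq_one_iff_of_nonneg h0 (Fact.out (p := p.Prime)).ne_zero).mp h

lemma abs_ee (t : ZMod p) : ‖ee p t‖ = 1 := by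
  unfold ee; rw [norm_pow, abs_eps, one_pow]

lemma ee_ne_zero (t : ZMod p) : ee p t ≠ 0 := by
  intro h
  have := abs_ee p t
  rw [h, norm_zero] at this
  norm_num at this

lemma conj_ee (t : ZMod p) : (starRingEnd ℂ) (ee p t) = ee p (-t) := by
  have h2 : ee p t * (starRingEnd ℂ) (ee p t) = 1 := by
    rw [Complex.mul_conj, ← Complex.sq_norm, abs_ee]
    norm_num
  exact mul_left_cancel₀ (ee_ne_zero p t) (h2.trans (ee_mul_neg p t).symm)

variable (n : ℕ)

def dotp (u x : Fin n → ZMod p) : ZMod p := ∑ i, u i * x i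

lemma dotp_add_right (u x y : Fin n → ZMod p) :
    dotp p n u (x + y) = dotp p n u x + dotp p n u y := by
  simp [dotp, mul_add, Finset.sum_add_distrib]

lemma dotp_sub_right (u x y : Fin n → ZMod p) :
    dotp p n u (x - y) = dotp p n u x - dotp p n u y := by
  simp [dotp, mul_sub, Finset.sum_sub_distrib]

lemma dotp_comm (u x : Fin n → ZMod p) : dotp p n u x = dotp p n x u := by
  simp [dotp, mul_comm]

lemma dotp_zero_left (x : Fin n → ZMod p) : dotp p n 0 x = 0 := by simp [dotp]

lemma dotp_zero_right (x : Fin n → ZMod p) : dotp p n x 0 = 0 := by simp [dotp]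

/-- The key character sum: for `c ≠ 0`, `Σ_z e(c·z) = 0`. -/
lemma sum_ee_dotp_eq_zero {c : Fin n → ZMod p} (hc : c ≠ 0) :
    ∑ z : Fin n → ZMod p, ee p (dotp p n c z) = 0 := by
  obtain ⟨j, hj⟩ := Function.ne_iff.mp hc
  set a : Fin n → ZMod p := Pi.single j (c j)⁻¹ with ha
  have hca : dotp p n c a = 1 := by
    rw [dotp, Finset.sum_eq_single j]
    · rw [ha, Pi.single_eq_same, mul_inv_cancel₀ hj]
    · intro i _ hij
      rw [ha, Pi.single_eq_of_ne hij, mul_zero]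
    · intro h; exact absurd (Finset.mem_univ j) h
  set S := ∑ z : Fin n → ZMod p, ee p (dotp p n c z) with hS
  have hbij : Function.Bijective (fun z : Fin n → ZMod p => z + a) :=
    (Equiv.addRight a).bijective
  have hre : ee p 1 * S = S := by
    rw [hS, Finset.mul_sum]
    exact Fintype.sum_bijective (· + a) hbij
      (fun z => ee p 1 * ee p (dotp p n c z)) (fun z => ee p (dotp p n c z))
      (fun z => by rw [dotp_add_right, hca, ee_add, mul_comm])
  have h1 : ee p 1 = eps p := by
    haveI : Fact (1 < p) := ⟨(Fact.out (p := p.Prime)).one_lt⟩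
    simp [ee, ZMod.val_one]
  by_contra hSne
  exact eps_ne_one p (h1 ▸ mul_right_cancel₀ hSne (by rw [one_mul]; exact hre))

lemma card_V : Fintype.card (Fin n → ZMod p) = p ^ n := by
  simp [ZMod.card]

/-- Orthogonality: `Σ_u e(u·v) = p^n` if `v = 0`, else `0`. -/
lemma sum_ee_dotp (v : Fin n → ZMod p) :
    ∑ u : Fin n → ZMod p, ee p (dotp p n u v) = if v = 0 then ((p : ℂ) ^ n) else 0 := by
  by_cases hv : v = 0
  · simp [hv, dotp_zero_right, ee_zero, card_V]
  · rw [if_neg hv]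
    rw [← sum_ee_dotp_eq_zero p n hv]
    exact Finset.sum_congr rfl fun u _ => by rw [dotp_comm]

lemma walsh_eq (g : (Fin n → ZMod p) → ZMod p) (u : Fin n → ZMod p) :
    walsh p n g u = ∑ x : Fin n → ZMod p, ee p (g x - dotp p n u x) := rfl

lemma bridge (z : ℂ) (r : ℝ) :
    ‖z‖ ^ 2 = r ↔ z * (starRingEnd ℂ) z = (r : ℂ) := by
  rw [Complex.mul_conj, ← Complex.sq_norm]
  exact Complex.ofReal_inj.symm

/-- The key autocorrelation identity. -/
lemma key (f : (Fin n → ZMod p) → (Fin n → ZMod p)) (c u : Fin n → ZMod p) :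
    walsh p n (fun x => dotp p n c (f x)) u *
      (starRingEnd ℂ) (walsh p n (fun x => dotp p n c (f x)) u) =
    ∑ a : Fin n → ZMod p, ee p (-(dotp p n u a)) *
      ∑ y : Fin n → ZMod p, ee p (dotp p n c (f (y + a) - f y)) := by
  rw [walsh_eq, map_sum]
  calc (∑ x : Fin n → ZMod p, ee p (dotp p n c (f x) - dotp p n u x)) *
        ∑ y : Fin n → ZMod p, (starRingEnd ℂ) (ee p (dotp p n c (f y) - dotp p n u y))
      = ∑ x : Fin n → ZMod p, ∑ y : Fin n → ZMod p,
          ee p ((dotp p n c (f x) - dotp p n u x) - (dotp p n c (f y) - dotp p n u y)) := by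
        rw [Finset.sum_mul_sum]
        refine Finset.sum_congr rfl fun x _ => Finset.sum_congr rfl fun y _ => ?_
        rw [conj_ee, ← ee_add, ← sub_eq_add_neg]
    _ = ∑ y : Fin n → ZMod p, ∑ x : Fin n → ZMod p,
          ee p ((dotp p n c (f x) - dotp p n u x) - (dotp p n c (f y) - dotp p n u y)) :=
        Finset.sum_comm
    _ = ∑ y : Fin n → ZMod p, ∑ a : Fin n → ZMod p,
          ee p ((dotp p n c (f (y + a)) - dotp p n u (y + a)) -
            (dotp p n c (f y) - dotp p n u y)) := by
        refine Finset.sum_congr rfl fun y _ => ?_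
        exact (Fintype.sum_bijective (fun a => y + a) (Equiv.addLeft y).bijective
          (fun a => ee p ((dotp p n c (f (y + a)) - dotp p n u (y + a)) -
            (dotp p n c (f y) - dotp p n u y)))
          (fun x => ee p ((dotp p n c (f x) - dotp p n u x) -
            (dotp p n c (f y) - dotp p n u y)))
          (fun a => rfl)).symm
    _ = ∑ y : Fin n → ZMod p, ∑ a : Fin n → ZMod p,
          ee p (-(dotp p n u a)) * ee p (dotp p n c (f (y + a) - f y)) := by
        refine Finset.sum_congr rfl fun y _ => Finset.sum_congr rfl fun a _ => ?_
        have harg : (dotp p n c (f (y + a)) - dotp p n u (y + a)) -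
            (dotp p n c (f y) - dotp p n u y) =
            (-(dotp p n u a)) + (dotp p n c (f (y + a)) - dotp p n c (f y)) := by
          rw [dotp_add_right]; ring
        rw [harg, ee_add, ← dotp_sub_right]
    _ = ∑ a : Fin n → ZMod p, ∑ y : Fin n → ZMod p,
          ee p (-(dotp p n u a)) * ee p (dotp p n c (f (y + a) - f y)) := Finset.sum_comm
    _ = ∑ a : Fin n → ZMod p, ee p (-(dotp p n u a)) *
          ∑ y : Fin n → ZMod p, ee p (dotp p n c (f (y + a) - f y)) := by
        refine Finset.sum_congr rfl fun a _ => ?_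
        rw [Finset.mul_sum]

lemma pn_ne_zero : ((p : ℂ) ^ n) ≠ 0 :=
  pow_ne_zero n (Nat.cast_ne_zero.mpr (Fact.out (p := p.Prime)).ne_zero)

end PlanarAux

open PlanarAux in
/-- A function `f : F_p^n → F_p^n` (p an odd prime, n ≥ 1) is planar iff all its
nonzero component functions `x ↦ c·f(x)` are bent. -/
theorem planar_iff_components_bent (p n : ℕ) [Fact p.Prime] (hp : Odd p) (hn : 1 ≤ n)
    (f : (Fin n → ZMod p) → (Fin n → ZMod p)) :
    (∀ a : Fin n → ZMod p, a ≠ 0 → Function.Bijective (fun x => f (x + a) - f x)) ↔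
    (∀ c : Fin n → ZMod p, c ≠ 0 → ∀ u : Fin n → ZMod p,
      ‖walsh p n (fun x => ∑ i, c i * f x i) u‖ ^ 2 = (p : ℝ) ^ n) := by
  classical
  have hg : ∀ c : Fin n → ZMod p,
      (fun x => ∑ i, c i * f x i) = (fun x => dotp p n c (f x)) := fun c => rfl
  -- the autocorrelation sums
  set S : (Fin n → ZMod p) → (Fin n → ZMod p) → ℂ :=
    fun c b => ∑ y : Fin n → ZMod p, ee p (dotp p n c (f (y + b) - f y)) with hSdef
  have hbridge : ∀ c u, ‖walsh p n (fun x => ∑ i, c i * f x i) u‖ ^ 2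
      = (p : ℝ) ^ n ↔
      ∑ b : Fin n → ZMod p, ee p (-(dotp p n u b)) * S c b = (p : ℂ) ^ n := by
    intro c u
    rw [bridge, hg c, key p n f c u]
    push_cast
    rfl
  constructor
  · -- planar → bent
    intro hplanar c hc u
    rw [hbridge]
    rw [Finset.sum_eq_single_of_mem 0 (Finset.mem_univ 0)]
    · simp [hSdef, dotp_zero_right, ee_zero, card_V]
    · intro b _ hb
      have hzero : S c b = 0 := by
        have h := Fintype.sum_bijective (fun x => f (x + b) - f x) (hplanar b hb)
          (fun y => ee p (dotp p n c (f (y + b) - f y)))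
          (fun z => ee p (dotp p n c z)) (fun y => rfl)
        show (∑ y : Fin n → ZMod p, ee p (dotp p n c (f (y + b) - f y))) = 0
        rw [h]
        exact sum_ee_dotp_eq_zero p n hc
      rw [hzero, mul_zero]
  · -- bent → planar
    intro hbent a ha
    have hW : ∀ c : Fin n → ZMod p, c ≠ 0 → ∀ u : Fin n → ZMod p,
        ∑ b : Fin n → ZMod p, ee p (-(dotp p n u b)) * S c b = (p : ℂ) ^ n :=
      fun c hc u => (hbridge c u).mp (hbent c hc u)
    -- S c b = 0 for c ≠ 0, b ≠ 0 (Fourier inversion over u)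
    have hS0 : ∀ c : Fin n → ZMod p, c ≠ 0 → ∀ b : Fin n → ZMod p, b ≠ 0 →
        S c b = 0 := by
      intro c hc b hb
      have key2 : ∑ u : Fin n → ZMod p, ee p (dotp p n u b) *
          (∑ b' : Fin n → ZMod p, ee p (-(dotp p n u b')) * S c b')
          = (p : ℂ) ^ n * S c b := by
        calc ∑ u : Fin n → ZMod p, ee p (dotp p n u b) *
              (∑ b' : Fin n → ZMod p, ee p (-(dotp p n u b')) * S c b')
            = ∑ u : Fin n → ZMod p, ∑ b' : Fin n → ZMod p,
                ee p (dotp p n u (b - b')) * S c b' := by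
              refine Finset.sum_congr rfl fun u _ => ?_
              rw [Finset.mul_sum]
              refine Finset.sum_congr rfl fun b' _ => ?_
              rw [← mul_assoc, ← ee_add, ← sub_eq_add_neg, ← dotp_sub_right]
          _ = ∑ b' : Fin n → ZMod p, ∑ u : Fin n → ZMod p,
                ee p (dotp p n u (b - b')) * S c b' := Finset.sum_comm
          _ = ∑ b' : Fin n → ZMod p,
                (if b - b' = 0 then ((p : ℂ) ^ n) else 0) * S c b' := by
              refine Finset.sum_congr rfl fun b' _ => ?_
              rw [← Finset.sum_mul, sum_ee_dotp]
          _ = (p : ℂ) ^ n * S c b := by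
              rw [Finset.sum_eq_single_of_mem b (Finset.mem_univ b)]
              · rw [sub_self, if_pos rfl]
              · intro b' _ hb'
                rw [if_neg (fun h => hb' (by linear_combination -h)), zero_mul]
      have lhs0 : ∑ u : Fin n → ZMod p, ee p (dotp p n u b) *
          (∑ b' : Fin n → ZMod p, ee p (-(dotp p n u b')) * S c b') = 0 := by
        calc ∑ u : Fin n → ZMod p, ee p (dotp p n u b) *
              (∑ b' : Fin n → ZMod p, ee p (-(dotp p n u b')) * S c b')
            = ∑ u : Fin n → ZMod p, ee p (dotp p n u b) * ((p : ℂ) ^ n) :=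
              Finset.sum_congr rfl fun u _ => by rw [hW c hc u]
          _ = (∑ u : Fin n → ZMod p, ee p (dotp p n u b)) * ((p : ℂ) ^ n) :=
              (Finset.sum_mul _ _ _).symm
          _ = 0 := by rw [sum_ee_dotp, if_neg hb, zero_mul]
      have := key2.symm.trans lhs0
      exact (mul_eq_zero.mp this).resolve_left (pn_ne_zero p n)
    have hS00 : S 0 a = (p : ℂ) ^ n := by
      simp [hSdef, dotp_zero_left, ee_zero, card_V]
    -- count fibers of the difference map (Fourier inversion over c)
    have hcount : ∀ z : Fin n → ZMod p,
        ∑ y : Fin n → ZMod p, (if f (y + a) - f y = z then (1 : ℂ) else 0) = 1 := by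
      intro z
      have hU : ∑ c : Fin n → ZMod p, ee p (-(dotp p n c z)) * S c a = (p : ℂ) ^ n := by
        rw [Finset.sum_eq_single_of_mem 0 (Finset.mem_univ 0)]
        · rw [hS00, dotp_zero_left, neg_zero, ee_zero, one_mul]
        · intro c _ hc
          rw [hS0 c hc a ha, mul_zero]
      have hU2 : ∑ c : Fin n → ZMod p, ee p (-(dotp p n c z)) * S c a
          = (p : ℂ) ^ n * ∑ y : Fin n → ZMod p,
              (if f (y + a) - f y = z then (1 : ℂ) else 0) := by
        calc ∑ c : Fin n → ZMod p, ee p (-(dotp p n c z)) * S c a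
            = ∑ c : Fin n → ZMod p, ∑ y : Fin n → ZMod p,
                ee p (dotp p n c ((f (y + a) - f y) - z)) := by
              refine Finset.sum_congr rfl fun c _ => ?_
              rw [hSdef, Finset.mul_sum]
              refine Finset.sum_congr rfl fun y _ => ?_
              rw [← ee_add, ← sub_eq_neg_add, ← dotp_sub_right]
          _ = ∑ y : Fin n → ZMod p, ∑ c : Fin n → ZMod p,
                ee p (dotp p n c ((f (y + a) - f y) - z)) := Finset.sum_comm
          _ = ∑ y : Fin n → ZMod p,
                (if (f (y + a) - f y) - z = 0 then ((p : ℂ) ^ n) else 0) := by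
              refine Finset.sum_congr rfl fun y _ => ?_
              rw [sum_ee_dotp]
          _ = ∑ y : Fin n → ZMod p,
                (p : ℂ) ^ n * (if f (y + a) - f y = z then (1 : ℂ) else 0) := by
              refine Finset.sum_congr rfl fun y _ => ?_
              by_cases hz : f (y + a) - f y = z
              · rw [if_pos (by rw [hz, sub_self]), if_pos hz, mul_one]
              · rw [if_neg (fun h => hz (sub_eq_zero.mp h)), if_neg hz, mul_zero]
          _ = (p : ℂ) ^ n * ∑ y : Fin n → ZMod p,
                (if f (y + a) - f y = z then (1 : ℂ) else 0) := (Finset.mul_sum _ _ _).symm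
      exact mul_left_cancel₀ (pn_ne_zero p n) ((hU2.symm.trans hU).trans
        (by rw [mul_one]))
    rw [Function.bijective_iff_existsUnique]
    intro z
    have h1 : ((Finset.univ.filter (fun y => f (y + a) - f y = z)).card : ℂ) = 1 := by
      rw [← Finset.sum_boole]
      exact hcount z
    have h2 : (Finset.univ.filter (fun y => f (y + a) - f y = z)).card = 1 := by
      exact_mod_cast h1
    obtain ⟨w, hw⟩ := Finset.card_eq_one.mp h2
    refine ⟨w, ?_, ?_⟩
    · have hwmem : w ∈ Finset.univ.filter (fun y => f (y + a) - f y = z) := by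
        rw [hw]; exact Finset.mem_singleton_self w
      exact (Finset.mem_filter.mp hwmem).2
    · intro y hy
      have : y ∈ Finset.univ.filter (fun y => f (y + a) - f y = z) :=
        Finset.mem_filter.mpr ⟨Finset.mem_univ y, hy⟩
      rw [hw] at this
      exact Finset.mem_singleton.mp this
end
end

section
/- For every u, c ∈ F_2^n, the map χ_{u,c}(x,y) = (−1)^{u·x + c·y} · i^{wt(c⊙x)} is multiplicative for the group operation (x₁,y₁) * (x₂,y₂) = (x₁+x₂, y₁+y₂+x₁⊙x₂) on F_2^n × F_2^n; that is, χ_{u,c}((x₁,y₁)*(x₂,y₂)) = χ_{u,c}(x₁,y₁) · χ_{u,c}(x₂,y₂) for all x₁,x₂,y₁,y₂ ∈ F_2^n. -/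
open Finset

noncomputable section

/-- Dot product on `F_2^n`. -/
def dotp {n : ℕ} (x y : Fin n → ZMod 2) : ZMod 2 := ∑ i, x i * y i

/-- Coordinatewise product on `F_2^n`. -/
def odot {n : ℕ} (x y : Fin n → ZMod 2) : Fin n → ZMod 2 := fun i => x i * y i

/-- Hamming weight of `z ∈ F_2^n`. -/
def wt {n : ℕ} (z : Fin n → ZMod 2) : ℕ := ∑ i, (z i).val

/-- The character `χ_{u,c}(x,y) = (−1)^{u·x + c·y} · i^{wt(c⊙x)}`. -/
def chi {n : ℕ} (u c : Fin n → ZMod 2) (x y : Fin n → ZMod 2) : ℂ :=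
  (-1 : ℂ) ^ (dotp u x + dotp c y).val * Complex.I ^ wt (odot c x)

lemma vals : ((0:ZMod 2)).val = 0 ∧ ((1:ZMod 2)).val = 1 ∧ ((2:ZMod 2)).val = 0 ∧
    ((3:ZMod 2)).val = 1 ∧ ((4:ZMod 2)).val = 0 ∧ ((5:ZMod 2)).val = 1 := by decide

lemma z2 (a : ZMod 2) : a = 0 ∨ a = 1 := by revert a; decide

lemma aux_neg_one_add (a b : ZMod 2) :
    (-1 : ℂ) ^ (a + b).val = (-1 : ℂ) ^ a.val * (-1 : ℂ) ^ b.val := by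
  rcases z2 a with rfl | rfl <;> rcases z2 b with rfl | rfl <;> norm_num [vals]

lemma aux_neg_one_sum {ι : Type*} (s : Finset ι) (f : ι → ZMod 2) :
    (-1 : ℂ) ^ (∑ i ∈ s, f i).val = ∏ i ∈ s, (-1 : ℂ) ^ (f i).val := by
  induction s using Finset.cons_induction with
  | empty => simp
  | cons a s h ih => rw [Finset.sum_cons, Finset.prod_cons, ← ih, aux_neg_one_add]

lemma chi_eq_prod {n : ℕ} (u c x y : Fin n → ZMod 2) :
    chi u c x y =
      ∏ i, ((-1 : ℂ) ^ (u i * x i + c i * y i).val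
        * Complex.I ^ (c i * x i).val) := by
  rw [chi, dotp, dotp, ← Finset.sum_add_distrib, aux_neg_one_sum, wt,
    ← Finset.prod_pow_eq_pow_sum, ← Finset.prod_mul_distrib]
  rfl

lemma key (u0 c0 a b p q : ZMod 2) :
    (-1 : ℂ) ^ (u0 * (a + b) + c0 * (p + q + a * b)).val
        * Complex.I ^ (c0 * (a + b)).val
      = ((-1 : ℂ) ^ (u0 * a + c0 * p).val * Complex.I ^ (c0 * a).val)
        * ((-1 : ℂ) ^ (u0 * b + c0 * q).val * Complex.I ^ (c0 * b).val) := by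
  rcases z2 u0 with rfl | rfl <;> rcases z2 c0 with rfl | rfl <;> rcases z2 a with rfl | rfl <;> rcases z2 b with rfl | rfl <;>
    rcases z2 p with rfl | rfl <;> rcases z2 q with rfl | rfl <;>
    norm_num [vals, Complex.I_mul_I]

/-- `χ_{u,c}` is multiplicative for the group operation
`(x₁,y₁) * (x₂,y₂) = (x₁+x₂, y₁+y₂+x₁⊙x₂)` on `F_2^n × F_2^n`. -/
theorem chi_multiplicative {n : ℕ} (u c : Fin n → ZMod 2)
    (x₁ x₂ y₁ y₂ : Fin n → ZMod 2) :
    chi u c (x₁ + x₂) (y₁ + y₂ + odot x₁ x₂) = chi u c x₁ y₁ * chi u c x₂ y₂ := by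
  rw [chi_eq_prod, chi_eq_prod, chi_eq_prod, ← Finset.prod_mul_distrib]
  refine Finset.prod_congr rfl fun i _ => ?_
  simpa [odot, Pi.add_apply] using key (u i) (c i) (x₁ i) (x₂ i) (y₁ i) (y₂ i)
end
end

section
/- Let F be the finite field with 2^n elements. For every c, x ∈ F, the element σ(c,x) = Σ_{0≤i<j≤n−1} (cx)^{2^i} (cx)^{2^j} ∈ F satisfies σ(c,x)² = σ(c,x); in particular σ(c,x) ∈ {0,1} ⊆ F. -/
open Finset

noncomputable section

noncomputable instance (n : ℕ) : Fintype (GaloisField 2 n) := Fintype.ofFinite _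

/-- The absolute trace `Tr : F → F_2` for `F = GaloisField 2 n`. -/
def Tr (n : ℕ) (z : GaloisField 2 n) : ZMod 2 :=
  Algebra.trace (ZMod 2) (GaloisField 2 n) z

/-- `σ(c,x) = Σ_{0 ≤ i < j ≤ n−1} (cx)^{2^i} (cx)^{2^j} ∈ F`. -/
def sigma (n : ℕ) (c x : GaloisField 2 n) : GaloisField 2 n :=
  ∑ p ∈ (Finset.range n ×ˢ Finset.range n).filter (fun p => p.1 < p.2),
    (c * x) ^ (2 ^ p.1) * (c * x) ^ (2 ^ p.2)

/-- Lift of an element of `{0,1} ⊆ F` to the integer `0` or `1`. -/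
def lift01 {n : ℕ} (a : GaloisField 2 n) : ℕ :=
  letI := Classical.decEq (GaloisField 2 n)
  if a = 1 then 1 else 0

/-- `σ(c,x)² = σ(c,x)`; in particular `σ(c,x) ∈ {0,1} ⊆ F`. -/
theorem sigma_sq_eq_sigma (n : ℕ) (c x : GaloisField 2 n) :
    sigma n c x ^ 2 = sigma n c x ∧ (sigma n c x = 0 ∨ sigma n c x = 1) := by
  have hmain : sigma n c x ^ 2 = sigma n c x := by
    rcases Nat.eq_zero_or_pos n with hn | hn
    · subst hn; simp [sigma]
    · set y := c * x with hy
      have hyn : y ^ 2 ^ n = y := by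
        have h1 := FiniteField.pow_card y
        have h2 : Fintype.card (GaloisField 2 n) = 2 ^ n := by
          rw [← Nat.card_eq_fintype_card, GaloisField.card 2 n hn.ne']
        rwa [h2] at h1
      unfold sigma
      rw [sum_pow_char]
      refine Finset.sum_nbij'
        (i := fun p => if p.2 = n - 1 then (0, p.1 + 1) else (p.1 + 1, p.2 + 1))
        (j := fun p => if p.1 = 0 then (p.2 - 1, n - 1) else (p.1 - 1, p.2 - 1))
        ?_ ?_ ?_ ?_ ?_
      · rintro ⟨a, b⟩ hp
        simp only [mem_filter, mem_product, mem_range] at hp ⊢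
        by_cases h : b = n - 1 <;> simp only [h, if_pos, if_neg, if_true, if_false,
          reduceIte] <;> simp [h] <;> omega
      · rintro ⟨a, b⟩ hp
        simp only [mem_filter, mem_product, mem_range] at hp ⊢
        by_cases h : a = 0 <;> simp [h] <;> omega
      · rintro ⟨a, b⟩ hp
        simp only [mem_filter, mem_product, mem_range] at hp
        by_cases h : b = n - 1
        · subst h
          simp only [if_pos rfl, Nat.add_sub_cancel]
          simp only [reduceIte, if_pos rfl]
          simp [Prod.ext_iff]
        · have h2 : ¬ (a + 1 = 0) := by omega
          simp only [if_neg h, if_neg h2, Nat.add_sub_cancel]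
      · rintro ⟨a, b⟩ hp
        simp only [mem_filter, mem_product, mem_range] at hp
        by_cases h : a = 0
        · subst h
          simp only [if_pos rfl]
          have : n - 1 = n - 1 := rfl
          simp [Prod.ext_iff]
          omega
        · have h2 : ¬ (b - 1 = n - 1) := by omega
          simp only [if_neg h, if_neg h2]
          simp [Prod.ext_iff]
          omega
      · rintro ⟨a, b⟩ hp
        simp only [mem_filter, mem_product, mem_range] at hp
        obtain ⟨⟨ha, hb⟩, hab⟩ := hp
        by_cases h : b = n - 1
        · subst h
          simp only [if_pos rfl]
          show (y ^ 2 ^ a * y ^ 2 ^ (n - 1)) ^ 2 = y ^ 2 ^ 0 * y ^ 2 ^ (a + 1)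
          calc (y ^ 2 ^ a * y ^ 2 ^ (n - 1)) ^ 2
              = y ^ 2 ^ (a + 1) * y ^ 2 ^ n := by
                rw [mul_pow, ← pow_mul, ← pow_mul, ← pow_succ, ← pow_succ,
                  Nat.sub_add_cancel hn]
            _ = y ^ 2 ^ 0 * y ^ 2 ^ (a + 1) := by
                rw [hyn, pow_zero, pow_one, mul_comm]
        · simp only [if_neg h]
          show (y ^ 2 ^ a * y ^ 2 ^ b) ^ 2 = y ^ 2 ^ (a + 1) * y ^ 2 ^ (b + 1)
          rw [mul_pow, ← pow_mul, ← pow_mul, ← pow_succ, ← pow_succ]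
  refine ⟨hmain, ?_⟩
  have h0 : sigma n c x * (sigma n c x - 1) = 0 := by linear_combination hmain
  rcases mul_eq_zero.mp h0 with h | h
  · exact Or.inl h
  · exact Or.inr (sub_eq_zero.mp h)
end
end

section
/- Let n ≥ 1 and let g : F_2^n → F_2 be affine, g(x) = a·x + b with a ∈ F_2^n and b ∈ F_2. If c ∈ F_2^n is not the all-ones vector 1 = (1,…,1), then g is not c-bent₄; that is, there exists u ∈ F_2^n with |U_g^c(u)| ≠ 2^{n/2}. -/
open Finset

noncomputable section

/-- The unitary transform `U_g^c(u) = Σ_x (−1)^{g(x)+u·x} · i^{wt(c⊙x)}`. -/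
def U {n : ℕ} (g : (Fin n → ZMod 2) → ZMod 2) (c u : Fin n → ZMod 2) : ℂ :=
  ∑ x : Fin n → ZMod 2, (-1 : ℂ) ^ (g x + dotp u x).val * Complex.I ^ wt (odot c x)

lemma neg_one_pow_val_add_one (v : ZMod 2) :
    (-1 : ℂ) ^ (v + 1).val = -(-1 : ℂ) ^ v.val := by
  rcases show v = 0 ∨ v = 1 by revert v; decide with rfl | rfl
  · rw [show ((0:ZMod 2)+1).val = 1 from rfl, show (0:ZMod 2).val = 0 from rfl]; norm_num
  · rw [show ((1:ZMod 2)+1).val = 0 from rfl, show (1:ZMod 2).val = 1 from rfl]; norm_num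

lemma dotp_add_single {n : ℕ} (y x : Fin n → ZMod 2) (j : Fin n) :
    dotp y (x + (Pi.single j 1 : Fin n → ZMod 2)) = dotp y x + y j := by
  unfold dotp
  have : ∀ i, y i * (x + (Pi.single j 1 : Fin n → ZMod 2)) i = y i * x i + y i * (Pi.single j 1 : Fin n → ZMod 2) i := by
    intro i; simp [mul_add]
  rw [Finset.sum_congr rfl fun i _ => this i, Finset.sum_add_distrib]
  congr 1
  rw [Finset.sum_eq_single j]
  · simp
  · intro i _ hij; simp [Pi.single_eq_of_ne hij]
  · simp

/-- A multivariate affine function `g(x) = a·x + b` is not `c`-bent₄ for any `c`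
different from the all-ones vector. -/
theorem affine_not_cBent4_of_ne_allOnes {n : ℕ} (hn : 1 ≤ n)
    (a : Fin n → ZMod 2) (b : ZMod 2) (c : Fin n → ZMod 2)
    (hc : c ≠ fun _ => 1) :
    ∃ u : Fin n → ZMod 2,
      ‖U (fun x => dotp a x + b) c u‖ ≠ (2 : ℝ) ^ ((n : ℝ) / 2) := by
  obtain ⟨j, hj⟩ : ∃ j, c j = 0 := by
    by_contra h
    push_neg at h
    apply hc
    funext i
    have h2 : ∀ y : ZMod 2, y ≠ 0 → y = 1 := by decide
    exact h2 _ (h i)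
  set e : Fin n → ZMod 2 := Pi.single j 1 with he
  refine ⟨a + e, ?_⟩
  have hU : U (fun x => dotp a x + b) c (a + e) = 0 := by
    unfold U
    refine Finset.sum_ninvolution (fun x => x + e) ?_ ?_ (fun x => Finset.mem_univ _)
      ?_
    · intro x
      have hodot : odot c (x + e) = odot c x := by
        funext i
        by_cases hij : i = j
        · subst hij; simp [odot, hj]
        · simp [odot, he, Pi.single_eq_of_ne hij]
      have hexp : dotp a (x + e) + b + dotp (a + e) (x + e)
          = (dotp a x + b + dotp (a + e) x) + 1 := by
        rw [dotp_add_single, dotp_add_single]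
        have : (a + e) j = a j + 1 := by simp [he]
        rw [this]
        have hch : ∀ v : ZMod 2, v + v = 0 := by decide
        ring_nf
        rw [show (2 : ZMod 2) = 0 from rfl]
        ring
      rw [hodot, hexp, neg_one_pow_val_add_one]
      ring
    · intro x _
      intro hfix
      have : e j = 0 := by
        have := congrFun hfix j
        simpa using this
      simp [he] at this
    · intro x
      funext i
      by_cases hij : i = j
      · subst hij
        have hch : ∀ v : ZMod 2, v + 1 + 1 = v := by decide
        simp [he, hch]
      · simp [he, Pi.single_eq_of_ne hij]
  rw [hU]
  simp only [norm_zero]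
  have : (0 : ℝ) < (2 : ℝ) ^ ((n : ℝ) / 2) := Real.rpow_pos_of_pos (by norm_num) _
  exact this.ne
end
end
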